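/- Let 0 < d < b < 1 be real constants. For each natural number n ≥ 2, set m_n = ⌈n^d⌉ and ς_n = ⌈min{ n, 2n·(1 − n^{d−b}) }⌉, and place ς_n balls independently and uniformly at random into m_n bins; let ς̄ denote the maximum bin load. Then P(ς̄ ≤ 2·ς_n/m_n) → 1 as n → ∞. -/

import Mathlib

open scoped Classical

section Stmt9Aux
open Finset Real

lemma mgf_sum (ς m : ℕ) (i : Fin m) :
    ∑ ω : Fin ς → Fin m, (2:ℝ) ^ ((Finset.univ.filter (fun j => ω j = i)).card)
      = ((m:ℝ) + 1) ^ ς := by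
  have h1 : ∀ ω : Fin ς → Fin m,
      (2:ℝ) ^ ((Finset.univ.filter (fun j => ω j = i)).card)
        = ∏ j : Fin ς, (if ω j = i then (2:ℝ) else 1) := by
    intro ω
    rw [Finset.card_filter, ← Finset.prod_pow_eq_pow_sum]
    exact Finset.prod_congr rfl fun j _ => by split_ifs <;> simp
  calc ∑ ω : Fin ς → Fin m, (2:ℝ) ^ ((Finset.univ.filter (fun j => ω j = i)).card)
      = ∑ ω : Fin ς → Fin m, ∏ j : Fin ς, (if ω j = i then (2:ℝ) else 1) := by
        exact Finset.sum_congr rfl fun ω _ => h1 ω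
    _ = ∏ _j : Fin ς, ∑ v : Fin m, (if v = i then (2:ℝ) else 1) :=
        (Fintype.prod_sum fun _j (v : Fin m) => (if v = i then (2:ℝ) else 1)).symm
    _ = ((m:ℝ) + 1) ^ ς := by
        have : ∑ v : Fin m, (if v = i then (2:ℝ) else 1) = (m:ℝ) + 1 := by
          have : ∀ v : Fin m, (if v = i then (2:ℝ) else 1)
              = (if v = i then (1:ℝ) else 0) + 1 := fun v => by split_ifs <;> norm_num
          simp [this, Finset.sum_add_distrib]
          ring
        simp [this]

lemma fail_bound (ς m : ℕ) :
    ((Finset.univ.filter (fun ω : Fin ς → Fin m =>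
        ¬ ∀ i, ((Finset.univ.filter (fun j => ω j = i)).card : ℝ)
          ≤ 2 * (ς:ℝ) / (m:ℝ))).card : ℝ)
      * (2:ℝ) ^ ((2 * (ς:ℝ) / (m:ℝ)))
      ≤ (m:ℝ) * ((m:ℝ) + 1) ^ ς := by
  classical
  set t : ℝ := 2 * (ς:ℝ) / (m:ℝ) with ht
  set F := Finset.univ.filter (fun ω : Fin ς → Fin m =>
    ¬ ∀ i, ((Finset.univ.filter (fun j => ω j = i)).card : ℝ) ≤ t) with hF
  set A : Fin m → Finset (Fin ς → Fin m) := fun i =>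
    Finset.univ.filter (fun ω => ¬ (((Finset.univ.filter (fun j => ω j = i)).card : ℝ) ≤ t))
    with hA
  have hsub : F ⊆ Finset.univ.biUnion A := by
    intro ω hω
    simp only [hF, Finset.mem_filter, Finset.mem_univ, true_and] at hω
    push_neg at hω
    obtain ⟨i, hi⟩ := hω
    exact Finset.mem_biUnion.2 ⟨i, Finset.mem_univ _, by
      simp only [hA, Finset.mem_filter, Finset.mem_univ, true_and, not_le]; exact hi⟩
  have hcard : (F.card : ℝ) ≤ ∑ i : Fin m, ((A i).card : ℝ) := by
    have := (Finset.card_le_card hsub).trans (Finset.card_biUnion_le)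
    exact_mod_cast this
  have hAi : ∀ i : Fin m, ((A i).card : ℝ) * (2:ℝ) ^ t ≤ ((m:ℝ) + 1) ^ ς := by
    intro i
    have hle : ∀ ω ∈ A i, (2:ℝ) ^ t ≤
        (2:ℝ) ^ (((Finset.univ.filter (fun j => ω j = i)).card : ℕ)) := by
      intro ω hω
      simp only [hA, Finset.mem_filter, Finset.mem_univ, true_and, not_le] at hω
      have := Real.rpow_le_rpow_of_exponent_le one_le_two hω.le
      rwa [Real.rpow_natCast] at this
    calc ((A i).card : ℝ) * (2:ℝ) ^ t
        ≤ ∑ ω ∈ A i, (2:ℝ) ^ (((Finset.univ.filter (fun j => ω j = i)).card : ℕ)) := by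
          have := Finset.card_nsmul_le_sum (A i)
            (fun ω => (2:ℝ) ^ (((Finset.univ.filter (fun j => ω j = i)).card : ℕ)))
            ((2:ℝ) ^ t) hle
          simpa [nsmul_eq_mul, mul_comm] using this
      _ ≤ ∑ ω : Fin ς → Fin m,
            (2:ℝ) ^ (((Finset.univ.filter (fun j => ω j = i)).card : ℕ)) := by
          apply Finset.sum_le_sum_of_subset_of_nonneg (Finset.subset_univ _)
          intro ω _ _; positivity
      _ = ((m:ℝ) + 1) ^ ς := mgf_sum ς m i
  calc (F.card : ℝ) * (2:ℝ) ^ t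
      ≤ (∑ i : Fin m, ((A i).card : ℝ)) * (2:ℝ) ^ t := by
        apply mul_le_mul_of_nonneg_right hcard (Real.rpow_nonneg (by norm_num) _)
    _ = ∑ i : Fin m, ((A i).card : ℝ) * (2:ℝ) ^ t := Finset.sum_mul _ _ _
    _ ≤ ∑ _i : Fin m, ((m:ℝ) + 1) ^ ς := Finset.sum_le_sum fun i _ => hAi i
    _ = (m:ℝ) * ((m:ℝ) + 1) ^ ς := by simp [mul_comm]

lemma prob_bound (ς m : ℕ) (hm : 0 < m) :
    1 - (m:ℝ) * Real.exp (((ς:ℝ)/(m:ℝ)) * (1 - 2 * Real.log 2))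
      ≤ ((Finset.univ.filter (fun ω : Fin ς → Fin m =>
          ∀ i, ((Finset.univ.filter (fun j => ω j = i)).card : ℝ)
            ≤ 2 * (ς:ℝ) / (m:ℝ))).card : ℝ) / (m:ℝ)^ς := by
  classical
  have hm0 : (0:ℝ) < m := by exact_mod_cast hm
  have hmp : (0:ℝ) < (m:ℝ)^ς := pow_pos hm0 ς
  set t : ℝ := 2 * (ς:ℝ) / (m:ℝ) with htd
  set S := Finset.univ.filter (fun ω : Fin ς → Fin m =>
    ∀ i, ((Finset.univ.filter (fun j => ω j = i)).card : ℝ) ≤ t) with hS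
  set F := Finset.univ.filter (fun ω : Fin ς → Fin m =>
    ¬ ∀ i, ((Finset.univ.filter (fun j => ω j = i)).card : ℝ) ≤ t) with hFd
  have htot : (S.card : ℝ) + (F.card : ℝ) = (m:ℝ)^ς := by
    have h := Finset.card_filter_add_card_filter_not
      (s := (Finset.univ : Finset (Fin ς → Fin m)))
      (p := fun ω : Fin ς → Fin m =>
        ∀ i, ((Finset.univ.filter (fun j => ω j = i)).card : ℝ) ≤ t)
    have hcu : (Finset.univ : Finset (Fin ς → Fin m)).card = m ^ ς := by
      simp [Finset.card_univ]
    rw [hcu] at h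
    exact_mod_cast h
  have hSdiv : (S.card : ℝ) / (m:ℝ)^ς = 1 - (F.card : ℝ) / (m:ℝ)^ς := by
    field_simp
    linarith
  rw [hSdiv]
  have key : (F.card : ℝ) / (m:ℝ)^ς
      ≤ (m:ℝ) * Real.exp (((ς:ℝ)/(m:ℝ)) * (1 - 2 * Real.log 2)) := by
    have hF1 : (F.card : ℝ) ≤ (m:ℝ) * ((m:ℝ)+1)^ς / (2:ℝ)^t := by
      rw [le_div_iff₀ (Real.rpow_pos_of_pos two_pos t)]
      exact fail_bound ς m
    have heq : ((m:ℝ) * ((m:ℝ)+1)^ς / (2:ℝ)^t) / (m:ℝ)^ς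
        = (m:ℝ) * (((m:ℝ)+1)/(m:ℝ))^ς * (2:ℝ)^(-t) := by
      rw [Real.rpow_neg (by norm_num), div_pow]
      field_simp
    have hpow : (((m:ℝ)+1)/(m:ℝ))^ς ≤ Real.exp ((ς:ℝ)/(m:ℝ)) := by
      have h1 : ((m:ℝ)+1)/(m:ℝ) = 1 + 1/(m:ℝ) := by field_simp
      have h2 : (1:ℝ) + 1/(m:ℝ) ≤ Real.exp (1/(m:ℝ)) := by
        have := Real.add_one_le_exp (1/(m:ℝ)); linarith
      have h3 : (((m:ℝ)+1)/(m:ℝ))^ς ≤ (Real.exp (1/(m:ℝ)))^ς := by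
        rw [h1]; exact pow_le_pow_left₀ (by positivity) h2 ς
      calc (((m:ℝ)+1)/(m:ℝ))^ς ≤ (Real.exp (1/(m:ℝ)))^ς := h3
        _ = Real.exp ((ς:ℝ) * (1/(m:ℝ))) := (Real.exp_nat_mul _ ς).symm
        _ = Real.exp ((ς:ℝ)/(m:ℝ)) := by rw [mul_one_div]
    calc (F.card : ℝ) / (m:ℝ)^ς
        ≤ ((m:ℝ) * ((m:ℝ)+1)^ς / (2:ℝ)^t) / (m:ℝ)^ς := by
          exact div_le_div_of_nonneg_right hF1 hmp.le |>.trans_eq rfl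
      _ = (m:ℝ) * (((m:ℝ)+1)/(m:ℝ))^ς * (2:ℝ)^(-t) := heq
      _ ≤ (m:ℝ) * Real.exp ((ς:ℝ)/(m:ℝ)) * (2:ℝ)^(-t) := by
          have h2t : (0:ℝ) ≤ (2:ℝ)^(-t) := Real.rpow_nonneg (by norm_num) _
          exact mul_le_mul_of_nonneg_right
            (mul_le_mul_of_nonneg_left hpow hm0.le) h2t
      _ = (m:ℝ) * Real.exp (((ς:ℝ)/(m:ℝ)) * (1 - 2 * Real.log 2)) := by
          rw [Real.rpow_def_of_pos two_pos, mul_assoc, ← Real.exp_add]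
          congr 1
          rw [htd]
          ring
  linarith

lemma prob_le_one (ς m : ℕ) (hm : 0 < m) :
    ((Finset.univ.filter (fun ω : Fin ς → Fin m =>
        ∀ i, ((Finset.univ.filter (fun j => ω j = i)).card : ℝ)
          ≤ 2 * (ς:ℝ) / (m:ℝ))).card : ℝ) / (m:ℝ)^ς ≤ 1 := by
  have hm0 : (0:ℝ) < m := by exact_mod_cast hm
  rw [div_le_one (pow_pos hm0 ς)]
  have h := Finset.card_filter_le (Finset.univ : Finset (Fin ς → Fin m))
    (fun ω : Fin ς → Fin m =>
      ∀ i, ((Finset.univ.filter (fun j => ω j = i)).card : ℝ) ≤ 2 * (ς:ℝ) / (m:ℝ))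
  have hcu : (Finset.univ : Finset (Fin ς → Fin m)).card = m ^ ς := by
    simp [Finset.card_univ]
  rw [hcu] at h
  exact_mod_cast h

theorem stmt_9' (b d : ℝ) (hd : 0 < d) (hdb : d < b) (hb : b < 1) :
    Filter.Tendsto
      (fun n : ℕ =>
        ((Finset.univ.filter
            (fun ω : Fin ⌈min (n : ℝ) (2 * (n : ℝ) * (1 - (n : ℝ) ^ (d - b)))⌉₊ →
                  Fin ⌈(n : ℝ) ^ d⌉₊ =>
              ∀ i,
                ((Finset.univ.filter (fun j => ω j = i)).card : ℝ)
                  ≤ 2 * (⌈min (n : ℝ) (2 * (n : ℝ) * (1 - (n : ℝ) ^ (d - b)))⌉₊ : ℝ)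
                      / (⌈(n : ℝ) ^ d⌉₊ : ℝ))).card : ℝ)
          / (⌈(n : ℝ) ^ d⌉₊ : ℝ)
              ^ (⌈min (n : ℝ) (2 * (n : ℝ) * (1 - (n : ℝ) ^ (d - b)))⌉₊ : ℕ))
      Filter.atTop (nhds 1) := by
  have hc : (0:ℝ) < 2 * Real.log 2 - 1 := by
    have := Real.log_two_gt_d9
    linarith
  set c : ℝ := 2 * Real.log 2 - 1 with hcd
  set g : ℕ → ℝ := fun n => 2 * (n:ℝ) * Real.exp (-(c/2) * (n:ℝ)^(1-d)) with hgd
  have h1d : 0 < 1 - d := by linarith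
  -- g tends to 0
  have hg : Filter.Tendsto g Filter.atTop (nhds 0) := by
    have houter : Filter.Tendsto
        (fun x : ℝ => 2 * (x ^ ((1-d)⁻¹) * Real.exp (-(c/2) * x)))
        Filter.atTop (nhds 0) := by
      have h := (tendsto_rpow_mul_exp_neg_mul_atTop_nhds_zero ((1-d)⁻¹)
        (c/2) (by positivity)).const_mul (2:ℝ)
      simpa using h
    have hinner : Filter.Tendsto (fun n : ℕ => (n:ℝ)^(1-d)) Filter.atTop Filter.atTop :=
      (tendsto_rpow_atTop h1d).comp tendsto_natCast_atTop_atTop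
    have h2 := houter.comp hinner
    apply h2.congr'
    filter_upwards [Filter.eventually_ge_atTop 1] with n hn
    have hn0 : (0:ℝ) ≤ (n:ℝ) := Nat.cast_nonneg n
    simp only [Function.comp_apply, hgd]
    rw [← Real.rpow_mul hn0, mul_inv_cancel₀ h1d.ne', Real.rpow_one]
    ring
  -- squeeze
  have hlow : ∀ᶠ n : ℕ in Filter.atTop,
      1 - g n ≤
        ((Finset.univ.filter
            (fun ω : Fin ⌈min (n : ℝ) (2 * (n : ℝ) * (1 - (n : ℝ) ^ (d - b)))⌉₊ →
                  Fin ⌈(n : ℝ) ^ d⌉₊ =>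
              ∀ i,
                ((Finset.univ.filter (fun j => ω j = i)).card : ℝ)
                  ≤ 2 * (⌈min (n : ℝ) (2 * (n : ℝ) * (1 - (n : ℝ) ^ (d - b)))⌉₊ : ℝ)
                      / (⌈(n : ℝ) ^ d⌉₊ : ℝ))).card : ℝ)
          / (⌈(n : ℝ) ^ d⌉₊ : ℝ)
              ^ (⌈min (n : ℝ) (2 * (n : ℝ) * (1 - (n : ℝ) ^ (d - b)))⌉₊ : ℕ) := by
    have hsmall : Filter.Tendsto (fun n : ℕ => (n:ℝ)^(d-b)) Filter.atTop (nhds 0) := by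
      have h := tendsto_rpow_neg_atTop (y := b - d) (by linarith)
      have h2 := h.comp tendsto_natCast_atTop_atTop
      simpa [neg_sub, Function.comp_def] using h2
    have hE2 : ∀ᶠ n : ℕ in Filter.atTop, (n:ℝ)^(d-b) ≤ 1/2 :=
      hsmall.eventually_le_const (by norm_num)
    filter_upwards [Filter.eventually_ge_atTop 1, hE2] with n hn1 hx
    set ς : ℕ := ⌈min (n : ℝ) (2 * (n : ℝ) * (1 - (n : ℝ) ^ (d - b)))⌉₊ with hςd
    set m : ℕ := ⌈(n : ℝ) ^ d⌉₊ with hmd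
    have hn1' : (1:ℝ) ≤ (n:ℝ) := by exact_mod_cast hn1
    have hn0' : (0:ℝ) < (n:ℝ) := by linarith
    have hmin : min (n : ℝ) (2 * (n : ℝ) * (1 - (n : ℝ) ^ (d - b))) = (n:ℝ) := by
      apply min_eq_left
      nlinarith [hx, hn0']
    have hςn : ς = n := by rw [hςd, hmin, Nat.ceil_natCast]
    have hd1 : (1:ℝ) ≤ (n:ℝ)^d := by
      have := Real.rpow_le_rpow_of_exponent_le hn1' hd.le
      rwa [Real.rpow_zero] at this
    have hdpos : (0:ℝ) < (n:ℝ)^d := by positivity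
    have hm_pos : 0 < m := Nat.ceil_pos.2 hdpos
    have hm0' : (0:ℝ) < (m:ℝ) := by exact_mod_cast hm_pos
    have hmlow : (n:ℝ)^d ≤ (m:ℝ) := Nat.le_ceil _
    have hmup : (m:ℝ) ≤ 2 * (n:ℝ)^d := by
      have := Nat.ceil_lt_add_one hdpos.le (R := ℝ)
      rw [← hmd] at this
      linarith
    have hmn : (m:ℝ) ≤ 2 * (n:ℝ) := by
      have hnd : (n:ℝ)^d ≤ (n:ℝ) := by
        have := Real.rpow_le_rpow_of_exponent_le hn1' (by linarith : d ≤ 1)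
        rwa [Real.rpow_one] at this
      linarith
    -- key exponential bound
    have hμ : (n:ℝ)^(1-d)/2 ≤ (ς:ℝ)/(m:ℝ) := by
      have hre : (n:ℝ)^(1-d) = (n:ℝ)/(n:ℝ)^d := by
        rw [Real.rpow_sub hn0', Real.rpow_one]
      rw [hre, hςn]
      rw [div_div]
      gcongr
      linarith
    have hexp : (m:ℝ) * Real.exp (((ς:ℝ)/(m:ℝ)) * (1 - 2 * Real.log 2)) ≤ g n := by
      have harg : ((ς:ℝ)/(m:ℝ)) * (1 - 2 * Real.log 2) ≤ -(c/2) * (n:ℝ)^(1-d) := by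
        have h1 : (1:ℝ) - 2 * Real.log 2 = -c := by rw [hcd]; ring
        rw [h1]
        have := mul_le_mul_of_nonpos_right hμ (by linarith : -c ≤ 0)
        calc (ς:ℝ)/(m:ℝ) * -c ≤ (n:ℝ)^(1-d)/2 * -c := this
          _ = -(c/2) * (n:ℝ)^(1-d) := by ring
      calc (m:ℝ) * Real.exp (((ς:ℝ)/(m:ℝ)) * (1 - 2 * Real.log 2))
          ≤ (2 * (n:ℝ)) * Real.exp (-(c/2) * (n:ℝ)^(1-d)) := by
            apply mul_le_mul hmn (Real.exp_le_exp.2 harg) (Real.exp_pos _).le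
              (by positivity)
        _ = g n := by rw [hgd]
    have hpb := prob_bound ς m hm_pos
    calc 1 - g n ≤ 1 - (m:ℝ) * Real.exp (((ς:ℝ)/(m:ℝ)) * (1 - 2 * Real.log 2)) := by
          linarith
      _ ≤ _ := hpb
  have hup : ∀ᶠ n : ℕ in Filter.atTop,
      ((Finset.univ.filter
            (fun ω : Fin ⌈min (n : ℝ) (2 * (n : ℝ) * (1 - (n : ℝ) ^ (d - b)))⌉₊ →
                  Fin ⌈(n : ℝ) ^ d⌉₊ =>
              ∀ i,
                ((Finset.univ.filter (fun j => ω j = i)).card : ℝ)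
                  ≤ 2 * (⌈min (n : ℝ) (2 * (n : ℝ) * (1 - (n : ℝ) ^ (d - b)))⌉₊ : ℝ)
                      / (⌈(n : ℝ) ^ d⌉₊ : ℝ))).card : ℝ)
          / (⌈(n : ℝ) ^ d⌉₊ : ℝ)
              ^ (⌈min (n : ℝ) (2 * (n : ℝ) * (1 - (n : ℝ) ^ (d - b)))⌉₊ : ℕ) ≤ 1 := by
    filter_upwards [Filter.eventually_ge_atTop 1] with n hn1
    have hn1' : (1:ℝ) ≤ (n:ℝ) := by exact_mod_cast hn1
    have hdpos : (0:ℝ) < (n:ℝ)^d := by positivity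
    exact prob_le_one _ _ (Nat.ceil_pos.2 hdpos)
  have hlim : Filter.Tendsto (fun n : ℕ => 1 - g n) Filter.atTop (nhds 1) := by
    have := (tendsto_const_nhds (x := (1:ℝ)) (f := Filter.atTop (α := ℕ))).sub hg
    simpa using this
  exact tendsto_of_tendsto_of_tendsto_of_le_of_le' hlim tendsto_const_nhds hlow hup

end Stmt9Aux

/-- Lemma 2: with `0 < d < b < 1`, `m_n = ⌈n^d⌉` bins (base stations) and
`ς_n = ⌈min{n, 2n(1 − n^{d−b})}⌉` balls (flows) placed independently and
uniformly at random into the bins (an outcome is a function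
`Fin ς_n → Fin m_n`, all outcomes equally likely), the probability that the
maximum bin load is at most `2·ς_n/m_n` tends to `1` as `n → ∞`. -/
theorem stmt_9 (b d : ℝ) (hd : 0 < d) (hdb : d < b) (hb : b < 1) :
    Filter.Tendsto
      (fun n : ℕ =>
        ((Finset.univ.filter
            (fun ω : Fin ⌈min (n : ℝ) (2 * (n : ℝ) * (1 - (n : ℝ) ^ (d - b)))⌉₊ →
                  Fin ⌈(n : ℝ) ^ d⌉₊ =>
              ∀ i,
                ((Finset.univ.filter (fun j => ω j = i)).card : ℝ)
                  ≤ 2 * (⌈min (n : ℝ) (2 * (n : ℝ) * (1 - (n : ℝ) ^ (d - b)))⌉₊ : ℝ)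
                      / (⌈(n : ℝ) ^ d⌉₊ : ℝ))).card : ℝ)
          / (⌈(n : ℝ) ^ d⌉₊ : ℝ)
              ^ (⌈min (n : ℝ) (2 * (n : ℝ) * (1 - (n : ℝ) ^ (d - b)))⌉₊ : ℕ))
      Filter.atTop (nhds 1) := stmt_9' b d hd hdb hb
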